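/- Let n ∈ ℕ, μ > 0 and x* ∈ ℝⁿ. The function y ↦ μ‖y‖₁ + (1/2)‖y − x*‖₂² has a unique global minimizer y*, given componentwise by the soft-thresholding formula y*ᵢ = sign(x*ᵢ) · max(|x*ᵢ| − μ, 0) for all i. -/

import Mathlib

noncomputable def l1Norm {n : ℕ} (x : Fin n → ℝ) : ℝ := ∑ i, |x i|

lemma soft_key (μ x t : ℝ) (hμ : 0 < μ) :
    μ * |Real.sign x * max (|x| - μ) 0| + (Real.sign x * max (|x| - μ) 0 - x) ^ 2 / 2
      + (t - Real.sign x * max (|x| - μ) 0) ^ 2 / 2 ≤ μ * |t| + (t - x) ^ 2 / 2 := by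
  have ht1 := le_abs_self t
  have ht2 := neg_abs_le t
  have ht3 := abs_nonneg t
  rcases lt_trichotomy x 0 with hx | hx | hx
  · rw [Real.sign_of_neg hx, abs_of_neg hx]
    rcases le_or_gt (-x) μ with h | h
    · rw [max_eq_right (by linarith)]
      simp only [mul_zero, abs_zero]
      nlinarith
    · rw [max_eq_left (by linarith)]
      rw [show (-1 : ℝ) * (-x - μ) = x + μ by ring, abs_of_neg (by linarith : x + μ < 0)]
      nlinarith
  · subst hx
    simp only [Real.sign_zero, zero_mul, abs_zero, mul_zero]
    nlinarith
  · rw [Real.sign_of_pos hx, abs_of_pos hx, one_mul]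
    rcases le_or_gt x μ with h | h
    · rw [max_eq_right (by linarith)]
      simp only [abs_zero]
      nlinarith
    · rw [max_eq_left (by linarith), abs_of_pos (by linarith : (0:ℝ) < x - μ)]
      nlinarith

/-- The proximal mapping of `μ‖·‖₁` is the componentwise soft-thresholding operator. -/
theorem stmt_6 {n : ℕ} (μ : ℝ) (hμ : 0 < μ) (xstar : EuclideanSpace ℝ (Fin n))
    (g : EuclideanSpace ℝ (Fin n) → ℝ)
    (hg : ∀ y, g y = μ * l1Norm y + 1 / 2 * ‖y - xstar‖ ^ 2)
    (ystar : EuclideanSpace ℝ (Fin n))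
    (hystar : ∀ i, ystar i = Real.sign (xstar i) * max (|xstar i| - μ) 0) :
    (∀ y, g ystar ≤ g y) ∧ ∀ y : EuclideanSpace ℝ (Fin n), (∀ z, g y ≤ g z) → y = ystar := by
  have hnorm : ∀ y : EuclideanSpace ℝ (Fin n),
      ‖y - xstar‖ ^ 2 = ∑ i, (y i - xstar i) ^ 2 := by
    intro y
    rw [EuclideanSpace.norm_eq, Real.sq_sqrt (by positivity)]
    congr 1; funext i
    simp [Real.norm_eq_abs, sq_abs]
  have hgsum : ∀ y : EuclideanSpace ℝ (Fin n),
      g y = ∑ i, (μ * |y i| + (y i - xstar i) ^ 2 / 2) := by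
    intro y
    rw [hg, l1Norm, hnorm, Finset.mul_sum, Finset.mul_sum, ← Finset.sum_add_distrib]
    exact Finset.sum_congr rfl fun i _ => by ring
  have key : ∀ y : EuclideanSpace ℝ (Fin n),
      g ystar + ∑ i, (y i - ystar i) ^ 2 / 2 ≤ g y := by
    intro y
    rw [hgsum, hgsum, ← Finset.sum_add_distrib]
    apply Finset.sum_le_sum
    intro i _
    rw [hystar i]
    exact soft_key μ (xstar i) (y i) hμ
  constructor
  · intro y
    have h1 := key y
    have h2 : (0:ℝ) ≤ ∑ i, (y i - ystar i) ^ 2 / 2 := by positivity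
    linarith
  · intro y hy
    have h1 := key y
    have h2 := hy ystar
    have h3 : ∑ i, (y i - ystar i) ^ 2 / 2 ≤ 0 := by linarith
    have h4 : ∀ i ∈ Finset.univ, (y i - ystar i) ^ 2 / 2 = 0 := by
      rw [← Finset.sum_eq_zero_iff_of_nonneg (fun i _ => by positivity)]
      have h5 : (0:ℝ) ≤ ∑ i, (y i - ystar i) ^ 2 / 2 :=
        Finset.sum_nonneg fun i _ => by positivity
      linarith
    ext i
    have := h4 i (Finset.mem_univ i)
    have : (y i - ystar i) ^ 2 = 0 := by linarith
    have := pow_eq_zero_iff (n := 2) (by norm_num) |>.mp this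
    linarith
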